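/- If ŵ is a minimal coset representative for a coset in W_{⊥φ}\Ŵ_{⊥φ}, then ŵρ lies in the dominant chamber C = {λ : (λ|α_i) ≥ 0 for all simple roots α_i}. -/

import Mathlib

open scoped RealInnerProductSpace BigOperators

noncomputable section

variable (V : Type) [NormedAddCommGroup V] [InnerProductSpace ℝ V] [FiniteDimensional ℝ V]

/-- A finite, reduced, crystallographic root system in a Euclidean space `V`,
with a chosen set of positive roots and the corresponding simple roots. -/
structure RootSystemData where
  /-- the rank -/
  l : ℕ
  /-- the simple roots -/
  simple : Fin l → V
  /-- the set of roots -/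
  roots : Finset V
  /-- the set of positive roots -/
  pos : Finset V
  pos_subset : pos ⊆ roots
  simple_mem_pos : ∀ i, simple i ∈ pos
  simple_indep : LinearIndependent ℝ simple
  span_roots : Submodule.span ℝ (roots : Set V) = ⊤
  root_ne_zero : ∀ α ∈ roots, α ≠ 0
  neg_mem : ∀ α ∈ roots, -α ∈ roots
  pos_iff : ∀ α ∈ roots, (α ∈ pos ↔ -α ∉ pos)
  pos_combo : ∀ α ∈ pos, ∃ c : Fin l → ℕ, α = ∑ i, (c i : ℝ) • simple i
  crystal : ∀ α ∈ roots, ∀ β ∈ roots, ∃ n : ℤ, 2 * ⟪β, α⟫ / ⟪α, α⟫ = (n : ℝ)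
  reflect_mem : ∀ α ∈ roots, ∀ β ∈ roots, β - (2 * ⟪β, α⟫ / ⟪α, α⟫) • α ∈ roots
  sub_mem : ∀ α ∈ roots, ∀ β ∈ roots, 0 < ⟪α, β⟫ → α ≠ β → α - β ∈ roots
  reduced : ∀ α ∈ roots, ∀ c : ℝ, c • α ∈ roots → c = 1 ∨ c = -1

namespace RootSystemData

open Classical

variable {V}

/-- The pairing `⟨λ, α∨⟩ = 2(λ|α)/(α|α)` of a vector with the coroot of `α`. -/
def pair (lam α : V) : ℝ := 2 * ⟪lam, α⟫ / ⟪α, α⟫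

/-- The orthogonal reflection in the hyperplane orthogonal to `α`. -/
def sRefl (α : V) : V ≃ₗᵢ[ℝ] V := Submodule.reflection ((ℝ ∙ α)ᗮ)

variable (R : RootSystemData V)

/-- Half the sum of the positive roots. -/
def ρ : V := (2 : ℝ)⁻¹ • ∑ φ ∈ R.pos, φ

/-- The (finite) Weyl group, generated by the simple reflections. -/
def W : Subgroup (V ≃ₗᵢ[ℝ] V) :=
  Subgroup.closure (Set.range fun i => sRefl (R.simple i))

/-- The length of a Weyl group element: the minimal length of a word in the
simple reflections expressing it. -/
def len (w : V ≃ₗᵢ[ℝ] V) : ℕ :=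
  sInf {k : ℕ | ∃ f : Fin k → Fin R.l,
    w = (List.ofFn fun j => sRefl (R.simple (f j))).prod}

/-- The inversion set `Φ_w = Φ₊ ∩ wΦ₋`. -/
def inversions (w : V ≃ₗᵢ[ℝ] V) : Finset V :=
  R.pos.filter fun x => -(w.symm x) ∈ R.pos

end RootSystemData

/-- An irreducible root system, together with its highest root `θ`. -/
structure IrredRootSystemData extends RootSystemData V where
  /-- the highest root -/
  θ : V
  θ_mem_pos : θ ∈ pos
  θ_highest : ∀ φ ∈ pos, ∃ c : Fin l → ℕ, θ - φ = ∑ i, (c i : ℝ) • simple i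
  θ_long : ∀ φ ∈ roots, ‖φ‖ ≤ ‖θ‖
  θ_dominant : ∀ i, 0 ≤ ⟪θ, simple i⟫
  irreducible : ∀ s : Finset V, s ⊆ roots →
      (∀ α ∈ s, ∀ β ∈ roots, β ∉ s → ⟪α, β⟫ = 0) → s = ∅ ∨ s = roots

namespace IrredRootSystemData

variable {V} (R : IrredRootSystemData V)

/-- The affine functional `L(φ) = 2(θ−φ|ρ)/(θ|θ)`. -/
def L (φ : V) : ℝ := 2 * ⟪R.θ - φ, R.toRootSystemData.ρ⟫ / ⟪R.θ, R.θ⟫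

/-- A root is long if it has the same length as the highest root. -/
def IsLong (φ : V) : Prop := ‖φ‖ = ‖R.θ‖

/-- The dual Coxeter number `g = ⟨ρ, θ∨⟩ + 1`. -/
def dualCox : ℝ := RootSystemData.pair R.toRootSystemData.ρ R.θ + 1

/-- The affine reflection `s₀(λ) = λ − (⟨λ,θ∨⟩ − g)θ` (scaled so that `s₀ρ = ρ + θ`). -/
def s0 (lam : V) : V := lam - (RootSystemData.pair lam R.θ - R.dualCox) • R.θ

end IrredRootSystemData

namespace IrredRootSystemData

variable {V} (R : IrredRootSystemData V)

/-- A simple reflection, viewed as an affine transformation. -/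
def affSimple (i : Fin R.l) : V ≃ᵃ[ℝ] V :=
  (RootSystemData.sRefl (R.simple i)).toLinearEquiv.toAffineEquiv

/-- The affine reflection `s₀ : λ ↦ s_θ λ + gθ` as an affine transformation. -/
def affS0 : V ≃ᵃ[ℝ] V :=
  ((RootSystemData.sRefl R.θ).toLinearEquiv.toAffineEquiv).trans
    (AffineEquiv.constVAdd ℝ V (R.dualCox • R.θ))

/-- The subgroup `Ŵ_{⊥φ}` of the affine Weyl group generated by those `s_i`
(`i = 0, …, l`, with `α₀ = −θ`) for which `α_i ⊥ φ`. -/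
def affWperp (φ : V) : Subgroup (V ≃ᵃ[ℝ] V) :=
  Subgroup.closure ({e | ∃ i, ⟪R.simple i, φ⟫ = 0 ∧ e = R.affSimple i} ∪
    {e | ⟪R.θ, φ⟫ = 0 ∧ e = R.affS0})

/-- The subgroup `W_{⊥φ}` generated by the simple reflections `s_i` (`i ≥ 1`)
with `α_i ⊥ φ`, viewed inside the affine Weyl group. -/
def finWperp (φ : V) : Subgroup (V ≃ᵃ[ℝ] V) :=
  Subgroup.closure {e | ∃ i, ⟪R.simple i, φ⟫ = 0 ∧ e = R.affSimple i}

/-- The length of an element of the affine Weyl group: the minimal length of a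
word in the generators `s₀, s₁, …, s_l`. -/
def affLen (wh : V ≃ᵃ[ℝ] V) : ℕ :=
  sInf {k : ℕ | ∃ f : Fin k → (V ≃ᵃ[ℝ] V),
    (∀ j, f j ∈ Set.range R.affSimple ∪ {R.affS0}) ∧ wh = (List.ofFn f).prod}

end IrredRootSystemData

section AuxiliaryLemmas
set_option linter.unusedSectionVars false
open scoped Classical

namespace IrredRootSystemData

open RootSystemData

variable {V}

/-- Reflection in the hyperplane orthogonal to `α`, as a bare map on vectors. -/
def rsv (α x : V) : V := x - RootSystemData.pair x α • α

/-- Positivity of the "affine root" datum `(β, n)`. -/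
def PosA (R : IrredRootSystemData V) (β : V) (n : ℤ) : Prop :=
  0 < n ∨ (n = 0 ∧ β ∈ R.pos)

/-- The lattice condition for the datum `(β, n)`. -/
def CcondA (R : IrredRootSystemData V) (β : V) (n : ℤ) : Prop :=
  ∃ m : ℤ, (n : ℝ) * ⟪β, β⟫ = (m : ℝ) * ⟪R.θ, R.θ⟫

/-- The affine reflection attached to `(β, n)` (scaled by `g`), as a bare map. -/
def arA (g : ℝ) (β : V) (n : ℤ) (x : V) : V :=
  x - (RootSystemData.pair x β + n * g) • β

variable (R : IrredRootSystemData V)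

lemma inner_self_root_pos {β : V} (hβ : β ∈ R.roots) : (0:ℝ) < ⟪β, β⟫ :=
  lt_of_le_of_ne real_inner_self_nonneg
    (Ne.symm (inner_self_ne_zero.2 (R.root_ne_zero β hβ)))

lemma simple_mem_roots (i : Fin R.l) : R.simple i ∈ R.roots :=
  R.pos_subset (R.simple_mem_pos i)

lemma theta_mem_roots : R.θ ∈ R.roots := R.pos_subset R.θ_mem_pos

lemma inner_rsv_left (α x y : V) : ⟪rsv α x, y⟫ = ⟪x, rsv α y⟫ := by
  simp only [rsv, RootSystemData.pair, inner_sub_left, inner_sub_right, inner_smul_left,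
    inner_smul_right, RCLike.conj_to_real, real_inner_comm y α]
  ring

lemma rsv_rsv {α : V} (hα : ⟪α, α⟫ ≠ (0:ℝ)) (x : V) : rsv α (rsv α x) = x := by
  simp only [rsv, RootSystemData.pair, inner_sub_left, inner_smul_left, RCLike.conj_to_real]
  match_scalars
  · ring
  · field_simp
    ring

lemma inner_rsv_rsv {α : V} (hα : ⟪α, α⟫ ≠ (0:ℝ)) (x y : V) :
    ⟪rsv α x, rsv α y⟫ = ⟪x, y⟫ := by
  rw [inner_rsv_left, rsv_rsv hα]

lemma pair_rsv {α : V} (hα : ⟪α, α⟫ ≠ (0:ℝ)) (x β : V) :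
    RootSystemData.pair (rsv α x) β = RootSystemData.pair x (rsv α β) := by
  have h1 : ⟪rsv α β, rsv α β⟫ = ⟪β, β⟫ := inner_rsv_rsv hα β β
  have h2 : ⟪rsv α x, β⟫ = ⟪x, rsv α β⟫ := inner_rsv_left α x β
  simp only [RootSystemData.pair, h1, h2]

lemma rsv_mem_roots {α β : V} (hα : α ∈ R.roots) (hβ : β ∈ R.roots) :
    rsv α β ∈ R.roots := by
  have := R.reflect_mem α hα β hβ
  simpa [rsv, RootSystemData.pair] using this

lemma rsv_sub_smul (α x y : V) (c : ℝ) :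
    rsv α (x - c • y) = rsv α x - c • rsv α y := by
  simp only [rsv, RootSystemData.pair, inner_sub_left, inner_smul_left, RCLike.conj_to_real]
  match_scalars <;> ring

lemma rsv_neg (α x : V) : rsv α (-x) = -rsv α x := by
  have := rsv_sub_smul α 0 x 1
  simpa [rsv, RootSystemData.pair] using this

lemma rsv_self {α : V} (hα : ⟪α, α⟫ ≠ (0:ℝ)) : rsv α α = -α := by
  simp only [rsv, RootSystemData.pair]
  rw [mul_div_assoc, div_self hα]
  module

lemma affSimple_apply (i : Fin R.l) (x : V) :
    R.affSimple i x = rsv (R.simple i) x := by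
  show (Submodule.reflection ((ℝ ∙ (R.simple i))ᗮ) x : V) = _
  rw [Submodule.reflection_orthogonal_apply, Submodule.reflection_apply, Submodule.starProjection_singleton]
  simp only [RCLike.ofReal_real_eq_id, id_eq, real_inner_self_eq_norm_sq,
    real_inner_comm (R.simple i) x, rsv, RootSystemData.pair]
  match_scalars <;> ring

lemma affS0_apply (x : V) : R.affS0 x = rsv R.θ x + R.dualCox • R.θ := by
  show R.dualCox • R.θ +ᵥ (Submodule.reflection ((ℝ ∙ R.θ)ᗮ) x : V) = _
  rw [Submodule.reflection_orthogonal_apply, Submodule.reflection_apply, Submodule.starProjection_singleton]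
  simp only [RCLike.ofReal_real_eq_id, id_eq, real_inner_self_eq_norm_sq,
    real_inner_comm R.θ x, rsv, RootSystemData.pair, vadd_eq_add]
  match_scalars <;> ring

lemma coords_zero (e : Fin R.l → ℝ) (h : ∑ i, e i • R.simple i = 0) : ∀ i, e i = 0 :=
  Fintype.linearIndependent_iff.1 R.simple_indep e h

lemma neg_mem_pos {β : V} (hβ : β ∈ R.roots) (h : β ∉ R.pos) : -β ∈ R.pos := by
  have := R.pos_iff (-β) (R.neg_mem β hβ)
  rw [neg_neg] at this
  exact this.2 (by simpa using h)

lemma pos_of_nat_combo {β : V} (hβ : β ∈ R.roots) (c : Fin R.l → ℕ)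
    (hc : β = ∑ i, (c i : ℝ) • R.simple i) : β ∈ R.pos := by
  by_contra h
  obtain ⟨d, hd⟩ := R.pos_combo (-β) (R.neg_mem_pos hβ h)
  have hsum : ∑ i, ((c i : ℝ) + (d i : ℝ)) • R.simple i = 0 := by
    simp only [add_smul, Finset.sum_add_distrib, ← hc, ← hd]
    abel
  have hz := R.coords_zero _ hsum
  have : β = 0 := by
    rw [hc]
    apply Finset.sum_eq_zero
    intro i _
    have h1 : (c i : ℝ) = 0 := by
      have := hz i
      have hcn : (0:ℝ) ≤ (c i : ℝ) := Nat.cast_nonneg _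
      have hdn : (0:ℝ) ≤ (d i : ℝ) := Nat.cast_nonneg _
      linarith
    rw [h1, zero_smul]
  exact R.root_ne_zero β hβ this

lemma simple_reflect_pos {β : V} {j : Fin R.l} (hβ : β ∈ R.pos)
    (hne : β ≠ R.simple j) : rsv (R.simple j) β ∈ R.pos := by
  set α := R.simple j with hαdef
  have hαr : α ∈ R.roots := R.simple_mem_roots j
  have hβr : β ∈ R.roots := R.pos_subset hβ
  have hroot : rsv α β ∈ R.roots := R.rsv_mem_roots hαr hβr
  by_contra h
  obtain ⟨d, hd⟩ := R.pos_combo (-(rsv α β)) (R.neg_mem_pos hroot h)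
  obtain ⟨c, hc⟩ := R.pos_combo β hβ
  set p := RootSystemData.pair β α with hp
  have h1 : ∑ i, (if i = j then (-p:ℝ) else 0) • R.simple i = -(p • α) := by
    rw [Finset.sum_eq_single j]
    · simp [hαdef]
    · intro b _ hb; simp [hb]
    · intro hj; exact absurd (Finset.mem_univ j) hj
  have hsum : ∑ i, ((c i : ℝ) + (d i : ℝ) + (if i = j then -p else 0)) • R.simple i = 0 := by
    simp only [add_smul, Finset.sum_add_distrib, ← hc, ← hd, h1]
    have hde : rsv α β = β - p • α := rfl
    rw [hde]
    abel
  have hz := R.coords_zero _ hsum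
  have hci : ∀ i, i ≠ j → (c i : ℝ) = 0 := by
    intro i hij
    have := hz i
    simp only [if_neg hij, add_zero] at this
    have hcn : (0:ℝ) ≤ (c i : ℝ) := Nat.cast_nonneg _
    have hdn : (0:ℝ) ≤ (d i : ℝ) := Nat.cast_nonneg _
    linarith
  have hβc : β = (c j : ℝ) • α := by
    have hss : ∑ i, (c i : ℝ) • R.simple i = (c j : ℝ) • R.simple j :=
      Finset.sum_eq_single_of_mem j (Finset.mem_univ j)
        (fun b _ hb => by rw [hci b hb, zero_smul])
    rw [hc, hss, hαdef]
  rcases R.reduced α hαr (c j) (hβc ▸ hβr) with h1' | h1'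
  · exact hne (by rw [hβc, h1', one_smul])
  · have : (0:ℝ) ≤ (c j : ℝ) := Nat.cast_nonneg _
    rw [h1'] at this; norm_num at this

lemma inner_nat_combo_nonneg {x : V} (hdom : ∀ i, 0 ≤ ⟪x, R.simple i⟫)
    (c : Fin R.l → ℕ) : 0 ≤ ⟪x, ∑ i, (c i : ℝ) • R.simple i⟫ := by
  rw [inner_sum]
  apply Finset.sum_nonneg
  intro i _
  rw [real_inner_smul_right]
  exact mul_nonneg (Nat.cast_nonneg _) (hdom i)

lemma inner_dominant_nonneg {x β : V} (hdom : ∀ i, 0 ≤ ⟪x, R.simple i⟫)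
    (hβ : β ∈ R.pos) : 0 ≤ ⟪x, β⟫ := by
  obtain ⟨c, hc⟩ := R.pos_combo β hβ
  rw [hc]
  exact R.inner_nat_combo_nonneg hdom c

lemma rho_dominant (i : Fin R.l) : 0 ≤ ⟪R.ρ, R.simple i⟫ := by
  set α := R.simple i with hαdef
  have hαr : α ∈ R.roots := R.simple_mem_roots i
  have hαα : (0:ℝ) < ⟪α, α⟫ := R.inner_self_root_pos hαr
  have hαα' : ⟪α, α⟫ ≠ (0:ℝ) := ne_of_gt hαα
  have hαpos : α ∈ R.pos := R.simple_mem_pos i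
  have key : ∑ β ∈ R.pos.erase α, ⟪β, α⟫ = 0 := by
    apply Finset.sum_involution (fun β _ => rsv α β)
    · intro β _
      rw [inner_rsv_left, rsv_self hαα', inner_neg_right]; ring
    · intro β _ hfa heq
      apply hfa
      have h2 : RootSystemData.pair β α • α = 0 := sub_eq_self.1 heq
      rcases smul_eq_zero.1 h2 with hp | hz
      · rw [RootSystemData.pair, div_eq_zero_iff] at hp
        rcases hp with hp | hp
        · linarith
        · exact absurd hp hαα'
      · exact absurd hz (R.root_ne_zero α hαr)
    · intro β hb
      rcases Finset.mem_erase.1 hb with ⟨hne, hbp⟩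
      refine Finset.mem_erase.2 ⟨?_, R.simple_reflect_pos hbp hne⟩
      intro heq
      have hβval : β = -α := by
        have h3 := congrArg (rsv α) heq
        rw [rsv_rsv hαα', rsv_self hαα'] at h3
        exact h3
      exact ((R.pos_iff α hαr).1 hαpos) (hβval ▸ hbp)
    · intro β _
      exact rsv_rsv hαα' β
  have hsum : ∑ β ∈ R.pos, ⟪β, α⟫ = ⟪α, α⟫ := by
    rw [← Finset.add_sum_erase _ (fun β => ⟪β, α⟫) hαpos, key, add_zero]
  have hρ : R.ρ = (2:ℝ)⁻¹ • ∑ φ ∈ R.pos, φ := rfl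
  rw [hρ, real_inner_smul_left, sum_inner, hsum]
  positivity

lemma inner_rho_nonneg {β : V} (hβ : β ∈ R.pos) : 0 ≤ ⟪R.ρ, β⟫ :=
  R.inner_dominant_nonneg R.rho_dominant hβ

lemma inner_theta_nonneg {β : V} (hβ : β ∈ R.pos) : 0 ≤ ⟪R.θ, β⟫ :=
  R.inner_dominant_nonneg R.θ_dominant hβ

lemma dualCox_ge_one : (1:ℝ) ≤ R.dualCox := by
  have h1 : 0 ≤ ⟪R.ρ, R.θ⟫ := R.inner_rho_nonneg R.θ_mem_pos
  have h2 : (0:ℝ) < ⟪R.θ, R.θ⟫ := R.inner_self_root_pos R.theta_mem_roots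
  have h3 : 0 ≤ RootSystemData.pair R.ρ R.θ := by
    rw [RootSystemData.pair]; positivity
  have h4 : R.dualCox = RootSystemData.pair R.ρ R.θ + 1 := rfl
  linarith

lemma dualCox_theta : R.dualCox * ⟪R.θ, R.θ⟫ = 2 * ⟪R.ρ, R.θ⟫ + ⟪R.θ, R.θ⟫ := by
  have h2 : ⟪R.θ, R.θ⟫ ≠ (0:ℝ) := ne_of_gt (R.inner_self_root_pos R.theta_mem_roots)
  have h4 : R.dualCox = RootSystemData.pair R.ρ R.θ + 1 := rfl
  rw [h4, RootSystemData.pair]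
  field_simp

lemma crystal_pair {α β : V} (hα : α ∈ R.roots) (hβ : β ∈ R.roots) :
    ∃ z : ℤ, RootSystemData.pair β α = (z:ℝ) :=
  R.crystal α hα β hβ

lemma pair_theta_le_one {β : V} (hβ : β ∈ R.pos) (hne : β ≠ R.θ) :
    RootSystemData.pair β R.θ ≤ 1 := by
  by_contra h
  push_neg at h
  have hθr := R.theta_mem_roots
  have hβr := R.pos_subset hβ
  have hθθ : (0:ℝ) < ⟪R.θ, R.θ⟫ := R.inner_self_root_pos hθr
  have hββ : (0:ℝ) < ⟪β, β⟫ := R.inner_self_root_pos hβr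
  obtain ⟨p, hp⟩ := R.crystal_pair hθr hβr
  obtain ⟨q, hq⟩ := R.crystal_pair hβr hθr
  have e1 : 2 * ⟪β, R.θ⟫ = (p:ℝ) * ⟪R.θ, R.θ⟫ := by
    rw [RootSystemData.pair] at hp
    field_simp at hp
    linarith
  have e2 : 2 * ⟪R.θ, β⟫ = (q:ℝ) * ⟪β, β⟫ := by
    rw [RootSystemData.pair] at hq
    field_simp at hq
    linarith
  have hp2 : (2:ℝ) ≤ (p:ℝ) := by
    have h1 : (1:ℝ) < (p:ℝ) := by
      rw [← hp]; exact h
    have : (1:ℤ) < p := by exact_mod_cast h1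
    exact_mod_cast this
  have hle : ⟪β, β⟫ ≤ ⟪R.θ, R.θ⟫ := by
    have := R.θ_long β hβr
    rw [real_inner_self_eq_norm_sq, real_inner_self_eq_norm_sq]
    have h0 : (0:ℝ) ≤ ‖β‖ := norm_nonneg _
    nlinarith [this]
  have hcomm : ⟪R.θ, β⟫ = ⟪β, R.θ⟫ := real_inner_comm _ _
  have hip : (0:ℝ) < ⟪β, R.θ⟫ := by nlinarith
  have hqp : (p:ℝ) ≤ (q:ℝ) := by nlinarith
  have cs := real_inner_mul_inner_self_le β R.θ
  have e2' : 2 * ⟪β, R.θ⟫ = (q:ℝ) * ⟪β, β⟫ := by rw [← hcomm]; exact e2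
  have e3 : 4 * (⟪β, R.θ⟫ * ⟪β, R.θ⟫) = (p:ℝ) * (q:ℝ) * (⟪R.θ, R.θ⟫ * ⟪β, β⟫) := by
    linear_combination (2 * ⟪β, R.θ⟫) * e1 + ((p:ℝ) * ⟪R.θ, R.θ⟫) * e2'
  have hTB : (0:ℝ) < ⟪R.θ, R.θ⟫ * ⟪β, β⟫ := mul_pos hθθ hββ
  have hpq4 : (p:ℝ) * q ≤ 4 := by nlinarith [e3, cs, hTB]
  have hp2' : (p:ℝ) = 2 := by nlinarith
  have hq2 : (q:ℝ) = 2 := by nlinarith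
  have hbθ : ⟪β, R.θ⟫ = ⟪R.θ, R.θ⟫ := by nlinarith
  have hbb : ⟪R.θ, β⟫ = ⟪β, β⟫ := by nlinarith
  have hzero : ⟪β - R.θ, β - R.θ⟫ = 0 := by
    simp only [inner_sub_left, inner_sub_right]
    nlinarith
  have : β - R.θ = 0 := inner_self_eq_zero.1 hzero
  exact hne (by linear_combination (norm := module) this)

lemma evp_nonneg {β : V} {n : ℤ} (hβ : β ∈ R.roots) (hC : R.CcondA β n)
    (hP : R.PosA β n) : 0 ≤ RootSystemData.pair R.ρ β + (n:ℝ) * R.dualCox := by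
  have hββ : (0:ℝ) < ⟪β, β⟫ := R.inner_self_root_pos hβ
  have hθθ : (0:ℝ) < ⟪R.θ, R.θ⟫ := R.inner_self_root_pos R.theta_mem_roots
  have hg1 : (1:ℝ) ≤ R.dualCox := R.dualCox_ge_one
  rcases hP with hn | ⟨hn0, hβp⟩
  · obtain ⟨m, hm⟩ := hC
    have hn1 : (1:ℝ) ≤ (n:ℝ) := by exact_mod_cast hn
    have hm1 : (1:ℝ) ≤ (m:ℝ) := by
      have hm0 : (0:ℝ) < (m:ℝ) := by nlinarith
      have : (0:ℤ) < m := by exact_mod_cast hm0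
      exact_mod_cast this
    have key : 0 ≤ 2 * ⟪R.ρ, β⟫ + 2 * ⟪R.ρ, R.θ⟫ + ⟪R.θ, R.θ⟫ := by
      by_cases hbp : β ∈ R.pos
      · have := R.inner_rho_nonneg hbp
        have := R.inner_rho_nonneg R.θ_mem_pos
        linarith
      · have hβ0 : -β ∈ R.pos := R.neg_mem_pos hβ hbp
        obtain ⟨c, hc⟩ := R.θ_highest (-β) hβ0
        have h5 : 0 ≤ ⟪R.ρ, R.θ - -β⟫ := by
          rw [hc]; exact R.inner_nat_combo_nonneg R.rho_dominant c
        rw [sub_neg_eq_add, inner_add_right] at h5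
        linarith
    have hchain : R.dualCox * ⟪R.θ, R.θ⟫ ≤ (n:ℝ) * R.dualCox * ⟪β, β⟫ := by
      have hgm : R.dualCox * ⟪R.θ, R.θ⟫ ≤ (m:ℝ) * (R.dualCox * ⟪R.θ, R.θ⟫) := by
        have hgT : (0:ℝ) < R.dualCox * ⟪R.θ, R.θ⟫ :=
          mul_pos (lt_of_lt_of_le zero_lt_one hg1) hθθ
        nlinarith [hgT, hm1]
      calc R.dualCox * ⟪R.θ, R.θ⟫ ≤ (m:ℝ) * (R.dualCox * ⟪R.θ, R.θ⟫) := hgm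
        _ = R.dualCox * ((m:ℝ) * ⟪R.θ, R.θ⟫) := by ring
        _ = R.dualCox * ((n:ℝ) * ⟪β, β⟫) := by rw [← hm]
        _ = (n:ℝ) * R.dualCox * ⟪β, β⟫ := by ring
    have hDT := R.dualCox_theta
    have hnum : 0 ≤ 2 * ⟪R.ρ, β⟫ + (n:ℝ) * R.dualCox * ⟪β, β⟫ := by linarith
    have : 0 ≤ (2 * ⟪R.ρ, β⟫ + (n:ℝ) * R.dualCox * ⟪β, β⟫) / ⟪β, β⟫ :=
      div_nonneg hnum (le_of_lt hββ)
    rw [RootSystemData.pair]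
    calc (0:ℝ) ≤ (2 * ⟪R.ρ, β⟫ + (n:ℝ) * R.dualCox * ⟪β, β⟫) / ⟪β, β⟫ := this
      _ = 2 * ⟪R.ρ, β⟫ / ⟪β, β⟫ + (n:ℝ) * R.dualCox := by
          field_simp
  · have h1 : 0 ≤ ⟪R.ρ, β⟫ := R.inner_rho_nonneg hβp
    have h2 : 0 ≤ RootSystemData.pair R.ρ β := by
      rw [RootSystemData.pair]; positivity
    rw [hn0]
    simpa using h2

lemma crossing_simple {β : V} {n : ℤ} {j : Fin R.l} (hβ : β ∈ R.roots)
    (hP : R.PosA β n) (hnP : ¬ R.PosA (rsv (R.simple j) β) n) :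
    β = R.simple j ∧ n = 0 := by
  rcases hP with hn | ⟨hn0, hβp⟩
  · exact absurd (Or.inl hn) hnP
  · refine ⟨?_, hn0⟩
    by_contra hne
    exact hnP (Or.inr ⟨hn0, R.simple_reflect_pos hβp hne⟩)

lemma crossing_s0 {β : V} {n z : ℤ} (hβ : β ∈ R.roots)
    (hz : (z:ℝ) = RootSystemData.pair R.θ β) (hC : R.CcondA β n) (hP : R.PosA β n)
    (hnP : ¬ R.PosA (rsv R.θ β) (n + z)) : β = -R.θ ∧ n = 1 := by
  have hθr := R.theta_mem_roots
  have hθθ : (0:ℝ) < ⟪R.θ, R.θ⟫ := R.inner_self_root_pos hθr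
  have hθθ' : ⟪R.θ, R.θ⟫ ≠ (0:ℝ) := ne_of_gt hθθ
  have hββ : (0:ℝ) < ⟪β, β⟫ := R.inner_self_root_pos hβ
  have hβ'r : rsv R.θ β ∈ R.roots := R.rsv_mem_roots hθr hβ
  have ez : 2 * ⟪R.θ, β⟫ = (z:ℝ) * ⟪β, β⟫ := by
    rw [RootSystemData.pair] at hz
    field_simp at hz
    linarith
  have hn1 : 1 ≤ n := by
    rcases hP with hn | ⟨hn0, hβp⟩
    · omega
    · exfalso
      subst hn0
      have hzθ : 0 ≤ ⟪R.θ, β⟫ := R.inner_theta_nonneg hβp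
      have hz0 : 0 ≤ z := by
        have : (0:ℝ) ≤ (z:ℝ) := by nlinarith
        exact_mod_cast this
      rcases lt_or_eq_of_le hz0 with hzpos | hzeq
      · exact hnP (Or.inl (by omega))
      · have hip0 : ⟪R.θ, β⟫ = 0 := by
          have : (z:ℝ) = 0 := by exact_mod_cast hzeq.symm
          nlinarith
        have hip0' : ⟪β, R.θ⟫ = 0 := by rw [real_inner_comm]; exact hip0
        have hrsv : rsv R.θ β = β := by
          rw [rsv, RootSystemData.pair, hip0']
          simp
        exact hnP (Or.inr ⟨by omega, by rw [hrsv]; exact hβp⟩)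
  have hnz : n + z ≤ 0 := by
    by_contra hcon
    push_neg at hcon
    exact hnP (Or.inl (by omega))
  by_cases hbt : β = -R.θ
  · refine ⟨hbt, ?_⟩
    subst hbt
    have hzv : z = -2 := by
      have : (z:ℝ) = -2 := by
        rw [hz, RootSystemData.pair]
        rw [inner_neg_right, inner_neg_left, inner_neg_right, neg_neg]
        field_simp
      exact_mod_cast this
    subst hzv
    have hn2 : n = 1 ∨ n = 2 := by omega
    rcases hn2 with h | h
    · exact h
    · exfalso
      subst h
      have hrsv : rsv R.θ (-R.θ) = R.θ := by
        rw [rsv_neg, rsv_self hθθ', neg_neg]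
      exact hnP (Or.inr ⟨by omega, by rw [hrsv]; exact R.θ_mem_pos⟩)
  · exfalso
    have hzneg : z ≤ -1 := by omega
    have hzneg' : (z:ℝ) ≤ -1 := by exact_mod_cast hzneg
    have hipneg : ⟪R.θ, β⟫ < 0 := by nlinarith
    have hβ0p : -β ∈ R.pos := by
      apply R.neg_mem_pos hβ
      intro hβp
      exact absurd (R.inner_theta_nonneg hβp) (not_le.2 hipneg)
    have hne0 : -β ≠ R.θ := by
      intro hh
      exact hbt (by rw [← hh, neg_neg])
    have hq := R.pair_theta_le_one hβ0p hne0
    rw [RootSystemData.pair, inner_neg_left] at hq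
    have hq' : -2 * ⟪β, R.θ⟫ ≤ ⟪R.θ, R.θ⟫ := by
      rw [div_le_one hθθ] at hq
      linarith
    have hcomm : ⟪R.θ, β⟫ = ⟪β, R.θ⟫ := real_inner_comm _ _
    obtain ⟨m, hm⟩ := hC
    have hn1' : (1:ℝ) ≤ (n:ℝ) := by exact_mod_cast hn1
    have hm1 : (1:ℝ) ≤ (m:ℝ) := by
      have hm0 : (0:ℝ) < (m:ℝ) := by nlinarith
      have : (0:ℤ) < m := by exact_mod_cast hm0
      exact_mod_cast this
    -- -z ≤ n
    have hzn : (-z:ℝ) * ⟪β, β⟫ ≤ (n:ℝ) * ⟪β, β⟫ := by nlinarith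
    have hzn' : -z ≤ n := by
      have : (-z:ℝ) ≤ (n:ℝ) := le_of_mul_le_mul_right (by exact_mod_cast hzn) hββ
      exact_mod_cast this
    have hzeq : z = -n := by omega
    have hnzeq : n + z = 0 := by omega
    -- m = 1
    have hmθ : (m:ℝ) * ⟪R.θ, R.θ⟫ = -2 * ⟪R.θ, β⟫ := by
      rw [← hm]
      have : (n:ℝ) = -(z:ℝ) := by exact_mod_cast (by omega : n = -z)
      nlinarith
    have hm1' : (m:ℝ) ≤ 1 := by nlinarith
    have hmeq : (m:ℝ) = 1 := le_antisymm hm1' hm1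
    -- pair β θ = -1
    have hpair : RootSystemData.pair β R.θ = -1 := by
      rw [RootSystemData.pair]
      have h2βθ : 2 * ⟪β, R.θ⟫ = -⟪R.θ, R.θ⟫ := by nlinarith
      rw [h2βθ]
      field_simp
    have hrsv : rsv R.θ β = β + R.θ := by
      rw [rsv, hpair]
      module
    have hnot : β + R.θ ∉ R.pos := by
      intro hmem
      exact hnP (Or.inr ⟨hnzeq, by rw [hrsv]; exact hmem⟩)
    obtain ⟨c, hcc⟩ := R.θ_highest (-β) hβ0p
    apply hnot
    apply R.pos_of_nat_combo (by rw [← hrsv]; exact hβ'r) c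
    rw [← hcc]
    module

lemma pair_add_left (x y β : V) :
    RootSystemData.pair (x + y) β = RootSystemData.pair x β + RootSystemData.pair y β := by
  simp only [RootSystemData.pair, inner_add_left]; ring

lemma pair_smul_left (c : ℝ) (x β : V) :
    RootSystemData.pair (c • x) β = c * RootSystemData.pair x β := by
  simp only [RootSystemData.pair, real_inner_smul_left]; ring

lemma rsv_add_smul (α x y : V) (c : ℝ) :
    rsv α (x + c • y) = rsv α x + c • rsv α y := by
  have := rsv_sub_smul α x y (-c)
  simpa [sub_neg_eq_add, neg_smul] using this

lemma step_simple (j : Fin R.l) (β : V) (n : ℤ) (x : V) :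
    RootSystemData.pair (R.affSimple j x) β + (n:ℝ) * R.dualCox =
      RootSystemData.pair x (rsv (R.simple j) β) + (n:ℝ) * R.dualCox := by
  have hαα : ⟪R.simple j, R.simple j⟫ ≠ (0:ℝ) :=
    ne_of_gt (R.inner_self_root_pos (R.simple_mem_roots j))
  rw [affSimple_apply, pair_rsv hαα]

lemma step_s0 {β : V} (n z : ℤ) (hz : (z:ℝ) = RootSystemData.pair R.θ β) (x : V) :
    RootSystemData.pair (R.affS0 x) β + (n:ℝ) * R.dualCox =
      RootSystemData.pair x (rsv R.θ β) + ((n + z : ℤ):ℝ) * R.dualCox := by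
  have hθθ : ⟪R.θ, R.θ⟫ ≠ (0:ℝ) :=
    ne_of_gt (R.inner_self_root_pos R.theta_mem_roots)
  rw [affS0_apply, pair_add_left, pair_smul_left, pair_rsv hθθ, ← hz]
  push_cast; ring

lemma conj_simple (j : Fin R.l) (β : V) (n : ℤ) (x : V) :
    arA R.dualCox β n (R.affSimple j x) =
      R.affSimple j (arA R.dualCox (rsv (R.simple j) β) n x) := by
  have hαα : ⟪R.simple j, R.simple j⟫ ≠ (0:ℝ) :=
    ne_of_gt (R.inner_self_root_pos (R.simple_mem_roots j))
  rw [affSimple_apply, affSimple_apply, arA, arA, rsv_sub_smul, rsv_rsv hαα, pair_rsv hαα]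

lemma conj_s0 {β : V} (n z : ℤ) (hz : (z:ℝ) = RootSystemData.pair R.θ β) (x : V) :
    arA R.dualCox β n (R.affS0 x) =
      R.affS0 (arA R.dualCox (rsv R.θ β) (n + z) x) := by
  have hθθ : ⟪R.θ, R.θ⟫ ≠ (0:ℝ) :=
    ne_of_gt (R.inner_self_root_pos R.theta_mem_roots)
  rw [affS0_apply, affS0_apply, arA, arA, rsv_sub_smul, rsv_rsv hθθ,
    pair_add_left, pair_smul_left, pair_rsv hθθ, ← hz]
  push_cast
  match_scalars <;> ring

lemma arA_zero (β x : V) : arA R.dualCox β 0 x = rsv β x := by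
  simp [arA, rsv]

lemma arA_s0 (x : V) : arA R.dualCox (-R.θ) 1 x = R.affS0 x := by
  rw [arA, affS0_apply, rsv]
  simp only [RootSystemData.pair, inner_neg_right, inner_neg_left, neg_neg, Int.cast_one]
  match_scalars <;> ring

lemma affSimple_invol (j : Fin R.l) (x : V) :
    R.affSimple j (R.affSimple j x) = x := by
  have hαα : ⟪R.simple j, R.simple j⟫ ≠ (0:ℝ) :=
    ne_of_gt (R.inner_self_root_pos (R.simple_mem_roots j))
  rw [affSimple_apply, affSimple_apply, rsv_rsv hαα]

lemma affS0_invol (x : V) : R.affS0 (R.affS0 x) = x := by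
  have hθθ : ⟪R.θ, R.θ⟫ ≠ (0:ℝ) :=
    ne_of_gt (R.inner_self_root_pos R.theta_mem_roots)
  rw [affS0_apply, affS0_apply, rsv_add_smul, rsv_rsv hθθ, rsv_self hθθ]
  match_scalars <;> ring

lemma exchange : ∀ (L : List (V ≃ᵃ[ℝ] V)),
    (∀ e ∈ L, e ∈ Set.range R.affSimple ∪ {R.affS0}) →
    ∀ (β : V) (n : ℤ), β ∈ R.roots → R.CcondA β n → R.PosA β n →
    RootSystemData.pair (L.prod R.ρ) β + (n:ℝ) * R.dualCox < 0 →
    ∃ L' : List (V ≃ᵃ[ℝ] V), (∀ e ∈ L', e ∈ Set.range R.affSimple ∪ {R.affS0}) ∧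
      L'.length + 1 = L.length ∧ ∀ x, arA R.dualCox β n (L.prod x) = L'.prod x := by
  intro L
  induction L with
  | nil =>
    intro _ β n hβ hC hP hlt
    exfalso
    have hge := R.evp_nonneg hβ hC hP
    rw [List.prod_nil] at hlt
    have h1 : ((1 : V ≃ᵃ[ℝ] V)) R.ρ = R.ρ := rfl
    rw [h1] at hlt
    linarith
  | cons e T ih =>
    intro hmem β n hβ hC hP hlt
    have hTmem : ∀ g ∈ T, g ∈ Set.range R.affSimple ∪ {R.affS0} :=
      fun g hg => hmem g (List.mem_cons_of_mem e hg)
    have heg := hmem e (List.mem_cons_self)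
    rw [List.prod_cons] at hlt
    have happ : ((e * T.prod) R.ρ) = e (T.prod R.ρ) := rfl
    rw [happ] at hlt
    rcases heg with ⟨j, rfl⟩ | he0
    · -- e = affSimple j
      have hαroot := R.simple_mem_roots j
      have hαα : ⟪R.simple j, R.simple j⟫ ≠ (0:ℝ) :=
        ne_of_gt (R.inner_self_root_pos hαroot)
      have hβ' : rsv (R.simple j) β ∈ R.roots := R.rsv_mem_roots hαroot hβ
      have hC' : R.CcondA (rsv (R.simple j) β) n := by
        obtain ⟨m, hm⟩ := hC
        exact ⟨m, by rw [inner_rsv_rsv hαα]; exact hm⟩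
      have hlt' : RootSystemData.pair (T.prod R.ρ) (rsv (R.simple j) β)
          + (n:ℝ) * R.dualCox < 0 := by
        have := R.step_simple j β n (T.prod R.ρ)
        linarith
      by_cases hP' : R.PosA (rsv (R.simple j) β) n
      · obtain ⟨L', hL'mem, hlen, hid⟩ := ih hTmem _ n hβ' hC' hP' hlt'
        refine ⟨R.affSimple j :: L', ?_, ?_, ?_⟩
        · intro g hg
          rcases List.mem_cons.1 hg with h | h
          · exact h ▸ Or.inl ⟨j, rfl⟩
          · exact hL'mem g h
        · simp only [List.length_cons]
          omega
        · intro x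
          rw [List.prod_cons, List.prod_cons]
          show arA R.dualCox β n ((R.affSimple j) (T.prod x)) = (R.affSimple j) (L'.prod x)
          rw [conj_simple, hid x]
      · obtain ⟨hβeq, hneq⟩ := R.crossing_simple hβ hP hP'
        subst hβeq; subst hneq
        refine ⟨T, hTmem, by simp, ?_⟩
        intro x
        rw [List.prod_cons]
        show arA R.dualCox (R.simple j) 0 ((R.affSimple j) (T.prod x)) = T.prod x
        rw [arA_zero, ← affSimple_apply, affSimple_invol]
    · -- e = affS0
      have he : e = R.affS0 := he0
      subst he
      have hθroot := R.theta_mem_roots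
      have hθθ : ⟪R.θ, R.θ⟫ ≠ (0:ℝ) := ne_of_gt (R.inner_self_root_pos hθroot)
      have hββ : (0:ℝ) < ⟪β, β⟫ := R.inner_self_root_pos hβ
      obtain ⟨z, hz0⟩ := R.crystal_pair hβ hθroot
      have hz : (z:ℝ) = RootSystemData.pair R.θ β := hz0.symm
      obtain ⟨z', hz'⟩ := R.crystal_pair hθroot hβ
      have hβ' : rsv R.θ β ∈ R.roots := R.rsv_mem_roots hθroot hβ
      have hC' : R.CcondA (rsv R.θ β) (n + z) := by
        obtain ⟨m, hm⟩ := hC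
        refine ⟨m + z', ?_⟩
        rw [inner_rsv_rsv hθθ]
        have e1 : (z:ℝ) * ⟪β, β⟫ = 2 * ⟪R.θ, β⟫ := by
          rw [hz, RootSystemData.pair]
          field_simp
        have e2 : (z':ℝ) * ⟪R.θ, R.θ⟫ = 2 * ⟪β, R.θ⟫ := by
          rw [← hz', RootSystemData.pair]
          field_simp
        have hcomm : ⟪R.θ, β⟫ = ⟪β, R.θ⟫ := real_inner_comm _ _
        push_cast
        nlinarith [hm, e1, e2]
      have hlt' : RootSystemData.pair (T.prod R.ρ) (rsv R.θ β)
          + ((n + z : ℤ):ℝ) * R.dualCox < 0 := by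
        have := R.step_s0 n z hz (T.prod R.ρ)
        linarith
      by_cases hP' : R.PosA (rsv R.θ β) (n + z)
      · obtain ⟨L', hL'mem, hlen, hid⟩ := ih hTmem _ (n + z) hβ' hC' hP' hlt'
        refine ⟨R.affS0 :: L', ?_, ?_, ?_⟩
        · intro g hg
          rcases List.mem_cons.1 hg with h | h
          · exact h ▸ Or.inr rfl
          · exact hL'mem g h
        · simp only [List.length_cons]
          omega
        · intro x
          rw [List.prod_cons, List.prod_cons]
          show arA R.dualCox β n (R.affS0 (T.prod x)) = R.affS0 (L'.prod x)
          rw [R.conj_s0 n z hz, hid x]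
      · obtain ⟨hβeq, hneq⟩ := R.crossing_s0 hβ hz hC hP hP'
        subst hβeq; subst hneq
        refine ⟨T, hTmem, by simp, ?_⟩
        intro x
        rw [List.prod_cons]
        show arA R.dualCox (-R.θ) 1 (R.affS0 (T.prod x)) = T.prod x
        rw [arA_s0, affS0_invol]

lemma gen_mul_self {e : V ≃ᵃ[ℝ] V} (he : e ∈ Set.range R.affSimple ∪ {R.affS0}) :
    e * e = 1 := by
  apply AffineEquiv.ext
  intro x
  rcases he with ⟨j, rfl⟩ | he0
  · exact R.affSimple_invol j x
  · have : e = R.affS0 := he0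
    subst this
    exact R.affS0_invol x

lemma reverse_prod_mul {G : Type*} [Group G] :
    ∀ (L : List G), (∀ e ∈ L, e * e = 1) → L.reverse.prod * L.prod = 1 := by
  intro L
  induction L with
  | nil => simp
  | cons e T ih =>
    intro h
    simp only [List.reverse_cons, List.prod_append, List.prod_cons, List.prod_nil, mul_one]
    have h1 : T.reverse.prod * T.prod = 1 := ih fun g hg => h g (List.mem_cons_of_mem e hg)
    have h2 : e * e = 1 := h e (List.mem_cons_self)
    calc T.reverse.prod * e * (e * T.prod)
        = T.reverse.prod * (e * e) * T.prod := by group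
      _ = T.reverse.prod * T.prod := by rw [h2]; group
      _ = 1 := h1

/-- The generating set of `affWperp`. -/
def wperpGens (φ : V) : Set (V ≃ᵃ[ℝ] V) :=
  {e | ∃ i, ⟪R.simple i, φ⟫ = 0 ∧ e = R.affSimple i} ∪ {e | ⟪R.θ, φ⟫ = 0 ∧ e = R.affS0}

lemma wperpGens_sub_gen {φ : V} {e : V ≃ᵃ[ℝ] V} (he : e ∈ R.wperpGens φ) :
    e ∈ Set.range R.affSimple ∪ {R.affS0} := by
  rcases he with ⟨i, _, rfl⟩ | ⟨_, rfl⟩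
  · exact Or.inl ⟨i, rfl⟩
  · exact Or.inr rfl

lemma exists_word {φ : V} {w : V ≃ᵃ[ℝ] V} (hw : w ∈ R.affWperp φ) :
    ∃ L : List (V ≃ᵃ[ℝ] V), (∀ e ∈ L, e ∈ R.wperpGens φ) ∧ w = L.prod := by
  refine Subgroup.closure_induction ?_ ?_ ?_ ?_ hw
  · intro e he
    exact ⟨[e], fun g hg => (List.mem_singleton.1 hg) ▸ he, (List.prod_singleton).symm⟩
  · exact ⟨[], by simp, rfl⟩
  · rintro x y _ _ ⟨L1, h1, rfl⟩ ⟨L2, h2, rfl⟩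
    refine ⟨L1 ++ L2, ?_, (List.prod_append).symm⟩
    intro e he
    rcases List.mem_append.1 he with h | h
    · exact h1 e h
    · exact h2 e h
  · rintro x _ ⟨L, h1, rfl⟩
    refine ⟨L.reverse, ?_, ?_⟩
    · intro e he
      exact h1 e (List.mem_reverse.1 he)
    · have := reverse_prod_mul L (fun e he => R.gen_mul_self (R.wperpGens_sub_gen (h1 e he)))
      exact (eq_inv_of_mul_eq_one_left this).symm

lemma affLen_le {w : V ≃ᵃ[ℝ] V} (L : List (V ≃ᵃ[ℝ] V))
    (hmem : ∀ e ∈ L, e ∈ Set.range R.affSimple ∪ {R.affS0}) (hw : w = L.prod) :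
    R.affLen w ≤ L.length := by
  apply Nat.sInf_le
  exact ⟨fun j => L.get j, fun j => hmem _ (L.get_mem j), by rw [hw, List.ofFn_get]⟩

lemma affLen_word {φ : V} {w : V ≃ᵃ[ℝ] V} (hw : w ∈ R.affWperp φ) :
    ∃ L : List (V ≃ᵃ[ℝ] V), (∀ e ∈ L, e ∈ Set.range R.affSimple ∪ {R.affS0}) ∧
      w = L.prod ∧ L.length = R.affLen w := by
  obtain ⟨L₀, hm₀, hw₀⟩ := R.exists_word hw
  have hne : {k : ℕ | ∃ f : Fin k → (V ≃ᵃ[ℝ] V),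
      (∀ j, f j ∈ Set.range R.affSimple ∪ {R.affS0}) ∧ w = (List.ofFn f).prod}.Nonempty := by
    refine ⟨L₀.length, fun j => L₀.get j, ?_, ?_⟩
    · intro j
      exact R.wperpGens_sub_gen (hm₀ _ (L₀.get_mem j))
    · rw [List.ofFn_get]; exact hw₀
  obtain ⟨f, hf, hprod⟩ := Nat.sInf_mem hne
  refine ⟨List.ofFn f, ?_, hprod, by rw [List.length_ofFn]; rfl⟩
  intro e he
  obtain ⟨j, rfl⟩ := List.mem_ofFn.1 he
  exact hf j

lemma inner_rsv_perp {α φ β : V} (h : ⟪α, φ⟫ = 0) : ⟪rsv α β, φ⟫ = ⟪β, φ⟫ := by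
  simp [rsv, inner_sub_left, inner_smul_left, h]

lemma perp_nonneg {φ : V} (what : V ≃ᵃ[ℝ] V) (hwhat : what ∈ R.affWperp φ)
    {i : Fin R.l} (hnp : ⟪R.simple i, φ⟫ ≠ 0) : 0 ≤ ⟪what R.ρ, R.simple i⟫ := by
  set T : (V ≃ᵃ[ℝ] V) → Prop := fun w => ∀ (β : V) (n : ℤ), β ∈ R.roots → ⟪β, φ⟫ ≠ 0 →
    R.CcondA β n → R.PosA β n → ∃ β' n', β' ∈ R.roots ∧ ⟪β', φ⟫ ≠ 0 ∧ R.CcondA β' n' ∧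
    R.PosA β' n' ∧ ∀ x : V, RootSystemData.pair (w x) β + (n:ℝ) * R.dualCox
      = RootSystemData.pair x β' + (n':ℝ) * R.dualCox with hT
  have genT : ∀ e ∈ R.wperpGens φ, T e := by
    intro e he
    rcases he with ⟨j, horth, rfl⟩ | ⟨horth, rfl⟩
    · intro β n hβ hβφ hC hP
      have hαroot := R.simple_mem_roots j
      have hαα : ⟪R.simple j, R.simple j⟫ ≠ (0:ℝ) :=
        ne_of_gt (R.inner_self_root_pos hαroot)
      refine ⟨rsv (R.simple j) β, n, R.rsv_mem_roots hαroot hβ, ?_, ?_, ?_, ?_⟩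
      · rw [inner_rsv_perp horth]; exact hβφ
      · obtain ⟨m, hm⟩ := hC
        exact ⟨m, by rw [inner_rsv_rsv hαα]; exact hm⟩
      · by_contra hP'
        obtain ⟨hβeq, _⟩ := R.crossing_simple hβ hP hP'
        exact hβφ (hβeq ▸ horth)
      · intro x
        exact R.step_simple j β n x
    · intro β n hβ hβφ hC hP
      have hθroot := R.theta_mem_roots
      have hθθ : ⟪R.θ, R.θ⟫ ≠ (0:ℝ) := ne_of_gt (R.inner_self_root_pos hθroot)
      obtain ⟨z, hz0⟩ := R.crystal_pair hβ hθroot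
      have hz : (z:ℝ) = RootSystemData.pair R.θ β := hz0.symm
      obtain ⟨z', hz'⟩ := R.crystal_pair hθroot hβ
      refine ⟨rsv R.θ β, n + z, R.rsv_mem_roots hθroot hβ, ?_, ?_, ?_, ?_⟩
      · rw [inner_rsv_perp horth]; exact hβφ
      · obtain ⟨m, hm⟩ := hC
        refine ⟨m + z', ?_⟩
        rw [inner_rsv_rsv hθθ]
        have hββ : (0:ℝ) < ⟪β, β⟫ := R.inner_self_root_pos hβ
        have e1 : (z:ℝ) * ⟪β, β⟫ = 2 * ⟪R.θ, β⟫ := by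
          rw [hz, RootSystemData.pair]; field_simp
        have e2 : (z':ℝ) * ⟪R.θ, R.θ⟫ = 2 * ⟪β, R.θ⟫ := by
          rw [← hz', RootSystemData.pair]; field_simp
        have hcomm : ⟪R.θ, β⟫ = ⟪β, R.θ⟫ := real_inner_comm _ _
        push_cast
        nlinarith [hm, e1, e2]
      · by_contra hP'
        obtain ⟨hβeq, _⟩ := R.crossing_s0 hβ hz hC hP hP'
        apply hβφ
        rw [hβeq, inner_neg_left, horth, neg_zero]
      · intro x
        exact R.step_s0 n z hz x
  have main : T what ∧ T what⁻¹ := by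
    refine Subgroup.closure_induction ?_ ?_ ?_ ?_ hwhat
    · intro e he
      have h1 : T e := genT e he
      constructor
      · exact h1
      · rw [show e⁻¹ = e from inv_eq_of_mul_eq_one_left
          (R.gen_mul_self (R.wperpGens_sub_gen he))]
        exact h1
    · constructor <;>
      · intro β n hβ hβφ hC hP
        exact ⟨β, n, hβ, hβφ, hC, hP, fun x => by simp⟩
    · rintro x y _ _ ⟨hx, hxi⟩ ⟨hy, hyi⟩
      have comp : ∀ a b : V ≃ᵃ[ℝ] V, T a → T b → T (a * b) := by
        intro a b ha hb β n hβ hβφ hC hP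
        obtain ⟨β₁, n₁, h1, h2, h3, h4, hval1⟩ := ha β n hβ hβφ hC hP
        obtain ⟨β₂, n₂, g1, g2, g3, g4, hval2⟩ := hb β₁ n₁ h1 h2 h3 h4
        refine ⟨β₂, n₂, g1, g2, g3, g4, ?_⟩
        intro u
        have happ : (a * b) u = a (b u) := rfl
        rw [happ, hval1 (b u), hval2 u]
      constructor
      · exact comp x y hx hy
      · rw [mul_inv_rev]
        exact comp y⁻¹ x⁻¹ hyi hxi
    · rintro x _ ⟨hx, hxi⟩
      exact ⟨hxi, by rw [inv_inv]; exact hx⟩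
  obtain ⟨β', n', hroot', hφ', hC', hP', hval⟩ :=
    main.1 (R.simple i) 0 (R.simple_mem_roots i) hnp ⟨0, by simp⟩
      (Or.inr ⟨rfl, R.simple_mem_pos i⟩)
  have hge := R.evp_nonneg hroot' hC' hP'
  have hv := hval R.ρ
  have hnn : 0 ≤ RootSystemData.pair (what R.ρ) (R.simple i) := by
    have : RootSystemData.pair (what R.ρ) (R.simple i) + ((0:ℤ):ℝ) * R.dualCox
        = RootSystemData.pair R.ρ β' + (n':ℝ) * R.dualCox := hv
    push_cast at this
    linarith
  have hαα : (0:ℝ) < ⟪R.simple i, R.simple i⟫ :=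
    R.inner_self_root_pos (R.simple_mem_roots i)
  rw [RootSystemData.pair] at hnn
  by_contra hneg
  push_neg at hneg
  have : 2 * ⟪what R.ρ, R.simple i⟫ / ⟪R.simple i, R.simple i⟫ < 0 :=
    div_neg_of_neg_of_pos (by linarith) hαα
  linarith

end IrredRootSystemData

end AuxiliaryLemmas

/-- If `ŵ` is a minimal coset representative for a coset in
`W_{⊥φ}\Ŵ_{⊥φ}`, then `ŵρ` lies in the dominant chamber. -/
theorem minimal_coset_representative_rho_dominant (R : IrredRootSystemData V)
    (φ : V) (hφ : φ ∈ R.pos) (hlong : R.IsLong φ)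
    (what : V ≃ᵃ[ℝ] V) (hwhat : what ∈ R.affWperp φ)
    (hmin : ∀ u ∈ R.finWperp φ, R.affLen what ≤ R.affLen (u * what)) :
    ∀ i : Fin R.l, 0 ≤ ⟪what R.ρ, R.simple i⟫ := by
  intro i
  by_cases hperp : ⟪R.simple i, φ⟫ = 0
  · by_contra hneg
    push_neg at hneg
    have hαα : (0:ℝ) < ⟪R.simple i, R.simple i⟫ :=
      R.inner_self_root_pos (R.simple_mem_roots i)
    obtain ⟨L, hLmem, hLprod, hLlen⟩ := R.affLen_word hwhat
    have hlt : RootSystemData.pair (L.prod R.ρ) (R.simple i)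
        + ((0:ℤ):ℝ) * R.dualCox < 0 := by
      rw [← hLprod]
      push_cast
      rw [RootSystemData.pair]
      have : 2 * ⟪what R.ρ, R.simple i⟫ / ⟪R.simple i, R.simple i⟫ < 0 :=
        div_neg_of_neg_of_pos (by linarith) hαα
      linarith
    obtain ⟨L', hmem', hlen', hid⟩ := R.exchange L hLmem (R.simple i) 0
      (R.simple_mem_roots i) ⟨0, by simp⟩ (Or.inr ⟨rfl, R.simple_mem_pos i⟩) hlt
    have heq : R.affSimple i * what = L'.prod := by
      apply AffineEquiv.ext
      intro x
      have hx := hid x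
      rw [← hLprod] at hx
      show (R.affSimple i) (what x) = L'.prod x
      rw [R.affSimple_apply, ← R.arA_zero]
      exact hx
    have hle : R.affLen (R.affSimple i * what) ≤ L'.length := R.affLen_le L' hmem' heq
    have hin : R.affSimple i ∈ R.finWperp φ :=
      Subgroup.subset_closure ⟨i, hperp, rfl⟩
    have hmin' := hmin _ hin
    omega
  · exact R.perp_nonneg what hwhat hperp
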